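/- Suppose A1 holds. Let μ > 0, σ > 0, x ∈ Q, z ∈ ℝⁿ, and let the symmetric matrix B satisfy B ⪰ (μ/2)·I and ‖B − ∇²f(z)‖ ≤ δ_B for some δ_B ≥ 0. Let x⁺ ∈ Q satisfy ‖∇M_{x,σ}(x⁺) + ψ'(x⁺)‖ ≤ (σ/4)‖x⁺ − x‖² for some ψ'(x⁺) ∈ ∂ψ(x⁺), where in the model g = ∇f(x). Then for every subgradient F'(x) = ∇f(x) + ψ'(x) with ψ'(x) ∈ ∂ψ(x): ‖∇f(x⁺) + ψ'(x⁺)‖ ≤ (3σ/4 + L/2)·(2‖F'(x)‖/μ)² + (δ_B + L‖x − z‖)·(2‖F'(x)‖/μ). -/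

import Mathlib

open RealInnerProductSpace

open intervalIntegral in
theorem taylor_grad_aux {E : Type*} [NormedAddCommGroup E] [InnerProductSpace ℝ E] [CompleteSpace E]
    (f : E → ℝ) (hf : ContDiff ℝ 2 f) (L : ℝ)
    (hLip : ∀ u v : E, ‖fderiv ℝ (gradient f) v - fderiv ℝ (gradient f) u‖ ≤ L * ‖v - u‖)
    (x y : E) :
    ‖gradient f y - gradient f x - fderiv ℝ (gradient f) x (y - x)‖ ≤ L / 2 * ‖y - x‖ ^ 2 := by
  set H := fderiv ℝ (gradient f) with hH
  have hg1 : ContDiff ℝ 1 (gradient f) :=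
    (InnerProductSpace.toDual ℝ E).symm.contDiff.comp (hf.fderiv_right (by norm_num))
  set d := y - x with hd
  set γ : ℝ → E := fun t => x + t • d with hγ
  have hγd : ∀ t : ℝ, HasDerivAt γ d t := fun t => by
    simpa only [one_smul] using ((hasDerivAt_id' t).smul_const d).const_add x
  set φ : ℝ → E := fun t => gradient f (γ t) - t • (H x d) with hφ
  have hφd : ∀ t : ℝ, HasDerivAt φ (H (γ t) d - H x d) t := by
    intro t
    have h1 : HasDerivAt (fun t => gradient f (γ t)) (H (γ t) d) t :=
      ((hg1.differentiable one_ne_zero (γ t)).hasFDerivAt.comp_hasDerivAt t (hγd t))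
    have h2 := h1.sub ((hasDerivAt_id' t).smul_const (H x d))
    simp only [one_smul] at h2
    exact h2
  have hcont : Continuous fun t => H (γ t) d - H x d := by
    have hγc : Continuous γ := by fun_prop
    have hHc : Continuous H := hg1.continuous_fderiv one_ne_zero
    exact ((((ContinuousLinearMap.apply ℝ E d).continuous).comp
      (hHc.comp hγc)).sub continuous_const)
  have hFTC : φ 1 - φ 0 = ∫ t in (0:ℝ)..1, (H (γ t) d - H x d) := by
    refine (integral_eq_sub_of_hasDerivAt (fun t _ => hφd t) (hcont.intervalIntegrable 0 1)).symm
  have hbound : ∀ t ∈ Set.Icc (0:ℝ) 1, ‖H (γ t) d - H x d‖ ≤ (L * ‖d‖ ^ 2) * t := by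
    intro t ht
    have h1 : ‖H (γ t) - H x‖ ≤ L * ‖t • d‖ := by simpa [γ] using hLip x (γ t)
    calc ‖(H (γ t) - H x) d‖ ≤ ‖H (γ t) - H x‖ * ‖d‖ := (H (γ t) - H x).le_opNorm d
      _ ≤ L * ‖t • d‖ * ‖d‖ := by gcongr
      _ = (L * ‖d‖ ^ 2) * t := by
          rw [norm_smul, Real.norm_eq_abs, abs_of_nonneg ht.1]; ring
  have hnorm : ‖φ 1 - φ 0‖ ≤ L / 2 * ‖d‖ ^ 2 := by
    rw [hFTC]
    refine (intervalIntegral.norm_integral_le_integral_norm (by norm_num)).trans ?_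
    have hmono : (∫ t in (0:ℝ)..1, ‖H (γ t) d - H x d‖) ≤ ∫ t in (0:ℝ)..1, (L * ‖d‖^2) * t := by
      apply integral_mono_on (by norm_num)
      · exact (hcont.norm.intervalIntegrable 0 1)
      · exact ((continuous_const.mul continuous_id).intervalIntegrable 0 1)
      · intro t ht
        simpa using hbound t ht
    refine hmono.trans ?_
    rw [intervalIntegral.integral_const_mul, integral_id]
    ring_nf
    norm_num
  have : φ 1 - φ 0 = gradient f y - gradient f x - H x d := by
    simp only [φ, γ, d, one_smul, zero_smul, add_zero]
    rw [add_sub_cancel]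
    abel
  rw [this] at hnorm
  exact hnorm

set_option maxHeartbeats 2000000 in
/-- local one-step contraction bound for the (sub)gradient norm of
`F = f + ψ` after an inexact cubic Newton step with exact gradient `g = ∇f(x)` and positive
definite lazy Hessian approximation `B`. -/
theorem stmt_15 {n : ℕ} (hn : 1 ≤ n)
    (f ψ : EuclideanSpace ℝ (Fin n) → ℝ) (Q : Set (EuclideanSpace ℝ (Fin n)))
    (L : ℝ) (hL : 0 ≤ L)
    (hf : ContDiff ℝ 2 f)
    (hLip : ∀ u v : EuclideanSpace ℝ (Fin n),
      ‖fderiv ℝ (gradient f) v - fderiv ℝ (gradient f) u‖ ≤ L * ‖v - u‖)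
    (hQconv : Convex ℝ Q) (hψconv : ConvexOn ℝ Q ψ)
    (μ σ δB : ℝ) (hμ : 0 < μ) (hσ : 0 < σ) (hδB : 0 ≤ δB)
    (x : EuclideanSpace ℝ (Fin n)) (hx : x ∈ Q) (z : EuclideanSpace ℝ (Fin n))
    (B : EuclideanSpace ℝ (Fin n) →L[ℝ] EuclideanSpace ℝ (Fin n))
    (hBsym : ∀ u v : EuclideanSpace ℝ (Fin n), ⟪B u, v⟫ = ⟪u, B v⟫)
    (hBpd : ∀ v : EuclideanSpace ℝ (Fin n), μ / 2 * ‖v‖ ^ 2 ≤ ⟪B v, v⟫)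
    (hB : ‖B - fderiv ℝ (gradient f) z‖ ≤ δB)
    (xp : EuclideanSpace ℝ (Fin n)) (hxp : xp ∈ Q)
    (ψp : EuclideanSpace ℝ (Fin n))
    (hψp : ∀ y : EuclideanSpace ℝ (Fin n), ψ xp + ⟪ψp, y - xp⟫ ≤ ψ y)
    (hmodel : ‖gradient f x + B (xp - x) + (σ / 2 * ‖xp - x‖) • (xp - x) + ψp‖ ≤
      σ / 4 * ‖xp - x‖ ^ 2) :
    ∀ ψx : EuclideanSpace ℝ (Fin n),
      (∀ y : EuclideanSpace ℝ (Fin n), ψ x + ⟪ψx, y - x⟫ ≤ ψ y) →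
      ‖gradient f xp + ψp‖ ≤
        (3 * σ / 4 + L / 2) * (2 * ‖gradient f x + ψx‖ / μ) ^ 2
          + (δB + L * ‖x - z‖) * (2 * ‖gradient f x + ψx‖ / μ) := by
  intro ψx hψx
  set H := fderiv ℝ (gradient f) with hH
  set d := xp - x with hd
  set r := ‖d‖ with hr
  set G := ‖gradient f x + ψx‖ with hG
  have hr0 : 0 ≤ r := norm_nonneg d
  have hG0 : 0 ≤ G := norm_nonneg _
  set e := gradient f x + B d + (σ / 2 * r) • d + ψp with he
  have hemodel : ‖e‖ ≤ σ / 4 * r ^ 2 := hmodel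
  -- Step 1 : r ≤ 2G/μ
  have hsub : ⟪ψx, d⟫ ≤ ⟪ψp, d⟫ := by
    have h1 := hψp x
    have h2 := hψx xp
    have hxd : x - xp = -d := by simp [hd]
    rw [hxd, inner_neg_right] at h1
    linarith
  have hinner : ⟪e, d⟫ ≤ σ / 4 * r ^ 3 := by
    calc ⟪e, d⟫ ≤ ‖e‖ * ‖d‖ := real_inner_le_norm e d
      _ ≤ σ / 4 * r ^ 2 * r := by gcongr
      _ = σ / 4 * r ^ 3 := by ring
  have hexp : ⟪e, d⟫ = ⟪gradient f x, d⟫ + ⟪B d, d⟫ + σ / 2 * r * r ^ 2 + ⟪ψp, d⟫ := by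
    simp only [he, inner_add_left, real_inner_smul_left, real_inner_self_eq_norm_sq]
    rfl
  have hlow : -(G * r) ≤ ⟪gradient f x + ψx, d⟫ := by
    have := abs_real_inner_le_norm (gradient f x + ψx) d
    rw [abs_le] at this
    exact this.1
  have hgd : ⟪gradient f x, d⟫ = ⟪gradient f x + ψx, d⟫ - ⟪ψx, d⟫ := by
    rw [inner_add_left]; ring
  have hbd := hBpd d
  have hkey : μ / 2 * r ^ 2 ≤ G * r := by
    rw [hgd] at hexp
    nlinarith [hinner, hexp, hsub, hlow, hbd, mul_nonneg hσ.le (pow_nonneg hr0 3)]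
  have hrR : r ≤ 2 * G / μ := by
    rcases eq_or_lt_of_le hr0 with h0 | hpos
    · rw [← h0]
      positivity
    · rw [le_div_iff₀ hμ]
      nlinarith [hkey, hpos]
  -- Step 2 : decomposition and norm bound
  have hT : ‖gradient f xp - gradient f x - H x d‖ ≤ L / 2 * r ^ 2 :=
    taylor_grad_aux f hf L hLip x xp
  have hD1 : ‖(H x - H z) d‖ ≤ L * ‖x - z‖ * r := by
    calc ‖(H x - H z) d‖ ≤ ‖H x - H z‖ * ‖d‖ := (H x - H z).le_opNorm d
      _ ≤ L * ‖x - z‖ * r := by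
          have := hLip z x
          gcongr
  have hD2 : ‖(H z - B) d‖ ≤ δB * r := by
    calc ‖(H z - B) d‖ ≤ ‖H z - B‖ * ‖d‖ := (H z - B).le_opNorm d
      _ ≤ δB * r := by
          have : ‖H z - B‖ ≤ δB := by rwa [norm_sub_rev] at hB
          gcongr
  have hS : ‖(σ / 2 * r) • d‖ = σ / 2 * r * r := by
    rw [norm_smul, Real.norm_eq_abs, abs_of_nonneg (by positivity)]
  have hdecomp : gradient f xp + ψp =
      (gradient f xp - gradient f x - H x d) + (H x - H z) d + (H z - B) d
        + e - (σ / 2 * r) • d := by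
    simp only [he, ContinuousLinearMap.sub_apply]
    abel
  have hfinal : ‖gradient f xp + ψp‖ ≤
      (3 * σ / 4 + L / 2) * r ^ 2 + (δB + L * ‖x - z‖) * r := by
    rw [hdecomp]
    calc ‖(gradient f xp - gradient f x - H x d) + (H x - H z) d + (H z - B) d
        + e - (σ / 2 * r) • d‖
        ≤ ‖(gradient f xp - gradient f x - H x d) + (H x - H z) d + (H z - B) d + e‖
            + ‖(σ / 2 * r) • d‖ := norm_sub_le _ _
      _ ≤ ‖(gradient f xp - gradient f x - H x d) + (H x - H z) d + (H z - B) d‖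
            + ‖e‖ + ‖(σ / 2 * r) • d‖ := by gcongr; exact norm_add_le _ _
      _ ≤ ‖(gradient f xp - gradient f x - H x d) + (H x - H z) d‖ + ‖(H z - B) d‖
            + ‖e‖ + ‖(σ / 2 * r) • d‖ := by gcongr; exact norm_add_le _ _
      _ ≤ ‖gradient f xp - gradient f x - H x d‖ + ‖(H x - H z) d‖ + ‖(H z - B) d‖
            + ‖e‖ + ‖(σ / 2 * r) • d‖ := by gcongr ?_ + _ + _ + _; exact norm_add_le _ _
      _ ≤ L / 2 * r ^ 2 + L * ‖x - z‖ * r + δB * r + σ / 4 * r ^ 2 + σ / 2 * r * r := by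
          rw [hS]; gcongr
      _ = (3 * σ / 4 + L / 2) * r ^ 2 + (δB + L * ‖x - z‖) * r := by ring
  refine hfinal.trans ?_
  have hR0 : 0 ≤ 2 * G / μ := by positivity
  have hcoef1 : 0 ≤ 3 * σ / 4 + L / 2 := by positivity
  have hcoef2 : 0 ≤ δB + L * ‖x - z‖ := by positivity
  gcongr
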